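/- Let Z = {z ∈ {0,1}^d : Σ_{i∈[d]} z_i ≤ κ} for some κ ∈ {2, …, d}, and let Ω = {(w, z) ∈ {0,1}^d × Z : Σ_{i∈[d]} w_i ≤ 1 and w_i ≤ z_i for all i ∈ [d]}. Then conv(Ω) = {(w, z) ∈ [0,1]^d × [0,1]^d : Σ_{i∈[d]} w_i ≤ 1, w_i ≤ z_i for all i ∈ [d], and Σ_{i∈[d]} z_i ≤ κ}. -/

import Mathlib

open Finset

def Pset (d κ : ℕ) : Set ((Fin d → ℝ) × (Fin d → ℝ)) :=
  {q : (Fin d → ℝ) × (Fin d → ℝ) |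
        (∀ i, q.1 i ∈ Set.Icc (0 : ℝ) 1) ∧ (∀ i, q.2 i ∈ Set.Icc (0 : ℝ) 1) ∧
        (∑ i, q.1 i) ≤ 1 ∧ (∀ i, q.1 i ≤ q.2 i) ∧ (∑ i, q.2 i) ≤ (κ : ℝ)}

def Oset (d κ : ℕ) : Set ((Fin d → ℝ) × (Fin d → ℝ)) :=
  {q : (Fin d → ℝ) × (Fin d → ℝ) |
        (∀ i, q.1 i = 0 ∨ q.1 i = 1) ∧
        ((∀ i, q.2 i = 0 ∨ q.2 i = 1) ∧ (∑ i, q.2 i) ≤ (κ : ℝ)) ∧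
        (∑ i, q.1 i) ≤ 1 ∧ (∀ i, q.1 i ≤ q.2 i)}

lemma perturb {d : ℕ} {κ : ℝ} {w z u v : Fin d → ℝ}
    (hw : ∀ t, 0 ≤ w t ∧ w t ≤ 1) (hz : ∀ t, 0 ≤ z t ∧ z t ≤ 1)
    (hwz : ∀ t, w t ≤ z t) (hS : ∑ t, w t ≤ 1) (hT : ∑ t, z t ≤ κ)
    (hd : Nonempty (Fin d))
    (hufrac : ∀ t, u t ≠ 0 → 0 < w t ∧ w t < 1)
    (hvfrac : ∀ t, v t ≠ 0 → 0 < z t ∧ z t < 1)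
    (htie : ∀ t, w t = z t → u t = v t)
    (hsu : ∑ t, u t = 0 ∨ ∑ t, w t < 1)
    (hsv : ∑ t, v t = 0 ∨ ∑ t, z t < κ) :
    ∃ ε : ℝ, 0 < ε ∧ ∀ s : ℝ, |s| ≤ ε →
      ((∀ t, 0 ≤ w t + s * u t ∧ w t + s * u t ≤ 1) ∧
       (∀ t, 0 ≤ z t + s * v t ∧ z t + s * v t ≤ 1) ∧
       (∑ t, (w t + s * u t)) ≤ 1 ∧
       (∀ t, w t + s * u t ≤ z t + s * v t) ∧
       (∑ t, (z t + s * v t)) ≤ κ) := by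
  classical
  set A : Fin d → ℝ := fun t => if u t = 0 then 1 else min (w t) (1 - w t) / |u t| with hA
  set B : Fin d → ℝ := fun t => if v t = 0 then 1 else min (z t) (1 - z t) / |v t| with hB
  set C : Fin d → ℝ := fun t => if w t = z t then 1 else (z t - w t) / (|u t| + |v t| + 1)
    with hC
  set D : ℝ := if (∑ t, u t) = 0 then 1 else (1 - ∑ t, w t) / (|∑ t, u t| + 1) with hD
  set E : ℝ := if (∑ t, v t) = 0 then 1 else (κ - ∑ t, z t) / (|∑ t, v t| + 1) with hE
  have hne : (Finset.univ : Finset (Fin d)).Nonempty := Finset.univ_nonempty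
  set δ : Fin d → ℝ := fun t => min (min (A t) (B t)) (C t) with hδ
  set ε : ℝ := min (Finset.univ.inf' hne δ) (min D E) with hε
  have hApos : ∀ t, 0 < A t := by
    intro t
    simp only [hA]
    split_ifs with h
    · norm_num
    · exact div_pos (lt_min (hufrac t h).1 (by linarith [(hufrac t h).2])) (abs_pos.mpr h)
  have hBpos : ∀ t, 0 < B t := by
    intro t
    simp only [hB]
    split_ifs with h
    · norm_num
    · exact div_pos (lt_min (hvfrac t h).1 (by linarith [(hvfrac t h).2])) (abs_pos.mpr h)
  have hCpos : ∀ t, 0 < C t := by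
    intro t
    simp only [hC]
    split_ifs with h
    · norm_num
    · have : w t < z t := lt_of_le_of_ne (hwz t) h
      have hp : (0:ℝ) < |u t| + |v t| + 1 := by positivity
      exact div_pos (by linarith) hp
  have hDpos : 0 < D := by
    simp only [hD]
    split_ifs with h
    · norm_num
    · have := hsu.resolve_left h
      have hp : (0:ℝ) < |∑ t, u t| + 1 := by positivity
      exact div_pos (by linarith) hp
  have hEpos : 0 < E := by
    simp only [hE]
    split_ifs with h
    · norm_num
    · have := hsv.resolve_left h
      have hp : (0:ℝ) < |∑ t, v t| + 1 := by positivity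
      exact div_pos (by linarith) hp
  have hεpos : 0 < ε := by
    apply lt_min
    · rw [Finset.lt_inf'_iff]
      exact fun t _ => lt_min (lt_min (hApos t) (hBpos t)) (hCpos t)
    · exact lt_min hDpos hEpos
  refine ⟨ε, hεpos, fun s hs => ?_⟩
  have hδle : ∀ t, |s| ≤ δ t := fun t =>
    hs.trans ((min_le_left _ _).trans (Finset.inf'_le _ (Finset.mem_univ t)))
  have hsA : ∀ t, |s| ≤ A t := fun t => (hδle t).trans ((min_le_left _ _).trans (min_le_left _ _))
  have hsB : ∀ t, |s| ≤ B t := fun t => (hδle t).trans ((min_le_left _ _).trans (min_le_right _ _))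
  have hsC : ∀ t, |s| ≤ C t := fun t => (hδle t).trans (min_le_right _ _)
  have hsD : |s| ≤ D := hs.trans ((min_le_right _ _).trans (min_le_left _ _))
  have hsE : |s| ≤ E := hs.trans ((min_le_right _ _).trans (min_le_right _ _))
  have key1 : ∀ t, 0 ≤ w t + s * u t ∧ w t + s * u t ≤ 1 := by
    intro t
    by_cases h : u t = 0
    · simpa [h] using hw t
    · have h1 : |s| ≤ min (w t) (1 - w t) / |u t| := by simpa [hA, h] using hsA t
      have h2 : |s * u t| ≤ min (w t) (1 - w t) := by
        rw [abs_mul]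
        calc |s| * |u t| ≤ (min (w t) (1 - w t) / |u t|) * |u t| :=
              mul_le_mul_of_nonneg_right h1 (abs_nonneg _)
          _ = min (w t) (1 - w t) := div_mul_cancel₀ _ (abs_ne_zero.mpr h)
      have h3 := abs_le.mp h2
      have h4 : min (w t) (1 - w t) ≤ w t := min_le_left _ _
      have h5 : min (w t) (1 - w t) ≤ 1 - w t := min_le_right _ _
      constructor <;> linarith [h3.1, h3.2]
  have key2 : ∀ t, 0 ≤ z t + s * v t ∧ z t + s * v t ≤ 1 := by
    intro t
    by_cases h : v t = 0
    · simpa [h] using hz t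
    · have h1 : |s| ≤ min (z t) (1 - z t) / |v t| := by simpa [hB, h] using hsB t
      have h2 : |s * v t| ≤ min (z t) (1 - z t) := by
        rw [abs_mul]
        calc |s| * |v t| ≤ (min (z t) (1 - z t) / |v t|) * |v t| :=
              mul_le_mul_of_nonneg_right h1 (abs_nonneg _)
          _ = min (z t) (1 - z t) := div_mul_cancel₀ _ (abs_ne_zero.mpr h)
      have h3 := abs_le.mp h2
      have h4 : min (z t) (1 - z t) ≤ z t := min_le_left _ _
      have h5 : min (z t) (1 - z t) ≤ 1 - z t := min_le_right _ _
      constructor <;> linarith [h3.1, h3.2]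
  have key3 : (∑ t, (w t + s * u t)) ≤ 1 := by
    rw [Finset.sum_add_distrib, ← Finset.mul_sum]
    by_cases h : (∑ t, u t) = 0
    · simpa [h] using hS
    · have hlt := hsu.resolve_left h
      have h1 : |s| ≤ (1 - ∑ t, w t) / (|∑ t, u t| + 1) := by simpa [hD, h] using hsD
      have hp : (0:ℝ) < |∑ t, u t| + 1 := by positivity
      have h2 : |s * ∑ t, u t| ≤ 1 - ∑ t, w t := by
        rw [abs_mul]
        have := mul_le_mul_of_nonneg_right h1 (abs_nonneg (∑ t, u t))
        have h3 : (1 - ∑ t, w t) / (|∑ t, u t| + 1) * |∑ t, u t| ≤ 1 - ∑ t, w t := by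
          rw [div_mul_eq_mul_div, div_le_iff₀ hp]
          nlinarith [abs_nonneg (∑ t, u t)]
        linarith
      linarith [(abs_le.mp h2).2]
  have key5 : (∑ t, (z t + s * v t)) ≤ κ := by
    rw [Finset.sum_add_distrib, ← Finset.mul_sum]
    by_cases h : (∑ t, v t) = 0
    · simpa [h] using hT
    · have hlt := hsv.resolve_left h
      have h1 : |s| ≤ (κ - ∑ t, z t) / (|∑ t, v t| + 1) := by simpa [hE, h] using hsE
      have hp : (0:ℝ) < |∑ t, v t| + 1 := by positivity
      have h2 : |s * ∑ t, v t| ≤ κ - ∑ t, z t := by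
        rw [abs_mul]
        have := mul_le_mul_of_nonneg_right h1 (abs_nonneg (∑ t, v t))
        have h3 : (κ - ∑ t, z t) / (|∑ t, v t| + 1) * |∑ t, v t| ≤ κ - ∑ t, z t := by
          rw [div_mul_eq_mul_div, div_le_iff₀ hp]
          nlinarith [abs_nonneg (∑ t, v t)]
        linarith
      linarith [(abs_le.mp h2).2]
  have key4 : ∀ t, w t + s * u t ≤ z t + s * v t := by
    intro t
    by_cases h : w t = z t
    · rw [h, htie t h]
    · have hlt : w t < z t := lt_of_le_of_ne (hwz t) h
      have h1 : |s| ≤ (z t - w t) / (|u t| + |v t| + 1) := by simpa [hC, h] using hsC t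
      have hp : (0:ℝ) < |u t| + |v t| + 1 := by positivity
      have h2 : |s| * (|u t| + |v t| + 1) ≤ z t - w t := (le_div_iff₀ hp).mp h1
      have h3 : s * u t ≤ |s| * |u t| := by
        rw [← abs_mul]; exact le_abs_self _
      have h4 : -(|s| * |v t|) ≤ s * v t := by
        rw [← abs_mul]; exact neg_abs_le _
      nlinarith [abs_nonneg s]
  exact ⟨key1, key2, key3, key4, key5⟩
section
variable {d κ : ℕ} {w z u v : Fin d → ℝ}

lemma frac_contra
    (hx : (w, z) ∈ (Pset d κ).extremePoints ℝ)
    (hne : ∃ t, u t ≠ 0 ∨ v t ≠ 0)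
    (hufrac : ∀ t, u t ≠ 0 → 0 < w t ∧ w t < 1)
    (hvfrac : ∀ t, v t ≠ 0 → 0 < z t ∧ z t < 1)
    (htie : ∀ t, w t = z t → u t = v t)
    (hsu : ∑ t, u t = 0 ∨ ∑ t, w t < 1)
    (hsv : ∑ t, v t = 0 ∨ ∑ t, z t < (κ:ℝ)) : False := by
  obtain ⟨hmem, hext⟩ := hx
  obtain ⟨hw, hz, hS, hwz, hT⟩ := hmem
  have hd : Nonempty (Fin d) := ⟨hne.choose⟩
  obtain ⟨ε, hεpos, hεmem⟩ := perturb (fun t => (hw t : 0 ≤ w t ∧ w t ≤ 1)) hz hwz hS hT hd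
    hufrac hvfrac htie hsu hsv
  have hm1 := hεmem ε (by rw [abs_of_pos hεpos])
  have hm2 := hεmem (-ε) (by rw [abs_neg, abs_of_pos hεpos])
  set x₁ : (Fin d → ℝ) × (Fin d → ℝ) :=
    (fun t => w t + (-ε) * u t, fun t => z t + (-ε) * v t) with hx₁
  set x₂ : (Fin d → ℝ) × (Fin d → ℝ) :=
    (fun t => w t + ε * u t, fun t => z t + ε * v t) with hx₂
  have hx₁m : x₁ ∈ Pset d κ := by
    exact ⟨fun i => Set.mem_Icc.mpr ⟨(hm2.1 i).1, (hm2.1 i).2⟩,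
      fun i => Set.mem_Icc.mpr ⟨(hm2.2.1 i).1, (hm2.2.1 i).2⟩, hm2.2.2.1, hm2.2.2.2.1, hm2.2.2.2.2⟩
  have hx₂m : x₂ ∈ Pset d κ := by
    exact ⟨fun i => Set.mem_Icc.mpr ⟨(hm1.1 i).1, (hm1.1 i).2⟩,
      fun i => Set.mem_Icc.mpr ⟨(hm1.2.1 i).1, (hm1.2.1 i).2⟩, hm1.2.2.1, hm1.2.2.2.1, hm1.2.2.2.2⟩
  have hseg : (w, z) ∈ openSegment ℝ x₁ x₂ := by
    refine ⟨1/2, 1/2, by norm_num, by norm_num, by norm_num, ?_⟩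
    apply Prod.ext
    · show (1/2 : ℝ) • x₁.1 + (1/2 : ℝ) • x₂.1 = w
      funext t
      simp only [hx₁, hx₂, Pi.add_apply, Pi.smul_apply, smul_eq_mul]
      ring
    · show (1/2 : ℝ) • x₁.2 + (1/2 : ℝ) • x₂.2 = z
      funext t
      simp only [hx₁, hx₂, Pi.add_apply, Pi.smul_apply, smul_eq_mul]
      ring
  have := hext hx₁m hx₂m hseg
  obtain ⟨t, ht⟩ := hne
  have h1 : x₂.1 = w := congrArg Prod.fst (hext hx₂m hx₁m (by rwa [openSegment_symm]))
  have h2 : x₂.2 = z := congrArg Prod.snd (hext hx₂m hx₁m (by rwa [openSegment_symm]))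
  rcases ht with h | h
  · have := congrFun h1 t
    simp only [hx₂] at this
    have : ε * u t = 0 := by linarith [this]
    rcases mul_eq_zero.mp this with h' | h'
    · exact absurd h' (ne_of_gt hεpos)
    · exact h h'
  · have := congrFun h2 t
    simp only [hx₂] at this
    have : ε * v t = 0 := by linarith [this]
    rcases mul_eq_zero.mp this with h' | h'
    · exact absurd h' (ne_of_gt hεpos)
    · exact h h'
end

lemma sum_ite₁ {d : ℕ} (i : Fin d) (a : ℝ) :
    (∑ t, (if t = i then a else 0)) = a := by
  simp [Finset.sum_ite_eq']

lemma sum_ite₂ {d : ℕ} {i j : Fin d} (hij : i ≠ j) (a b : ℝ) :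
    (∑ t, (if t = i then a else if t = j then b else 0)) = a + b := by
  have : ∀ t : Fin d, (if t = i then a else if t = j then b else 0) =
      (if t = i then a else 0) + (if t = j then b else 0) := by
    intro t
    by_cases h1 : t = i <;> by_cases h2 : t = j <;> simp_all
  simp only [this, Finset.sum_add_distrib, sum_ite₁]

lemma sum_ite₃ {d : ℕ} {i j k : Fin d} (hij : i ≠ j) (hik : i ≠ k) (hjk : j ≠ k)
    (a b c : ℝ) :
    (∑ t, (if t = i then a else if t = j then b else if t = k then c else 0)) = a + b + c := by
  have : ∀ t : Fin d, (if t = i then a else if t = j then b else if t = k then c else 0) =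
      (if t = i then a else 0) + (if t = j then b else if t = k then c else 0) := by
    intro t
    by_cases h1 : t = i <;> by_cases h2 : t = j <;> by_cases h3 : t = k <;> simp_all
  rw [Finset.sum_congr rfl (fun t _ => this t), Finset.sum_add_distrib, sum_ite₁, sum_ite₂ hjk]
  ring

lemma C1 {d κ : ℕ} {w z : Fin d → ℝ}
    (hx : (w, z) ∈ (Pset d κ).extremePoints ℝ) (i : Fin d) (a b : ℝ)
    (hab : a ≠ 0 ∨ b ≠ 0)
    (hfa : a ≠ 0 → 0 < w i ∧ w i < 1) (hfb : b ≠ 0 → 0 < z i ∧ z i < 1)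
    (htie : w i = z i → a = b)
    (hsa : a = 0 ∨ ∑ t, w t < 1) (hsb : b = 0 ∨ ∑ t, z t < (κ:ℝ)) : False := by
  classical
  refine frac_contra (u := fun t => if t = i then a else 0)
    (v := fun t => if t = i then b else 0) hx ⟨i, ?_⟩ ?_ ?_ ?_ ?_ ?_
  · simpa using hab
  · intro t ht
    by_cases h : t = i
    · subst h; exact hfa (by simpa using ht)
    · simp [h] at ht
  · intro t ht
    by_cases h : t = i
    · subst h; exact hfb (by simpa using ht)
    · simp [h] at ht
  · intro t hw'
    by_cases h : t = i
    · subst h; simp [htie hw']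
    · simp [h]
  · rw [sum_ite₁]; exact hsa
  · rw [sum_ite₁]; exact hsb

lemma C2 {d κ : ℕ} {w z : Fin d → ℝ}
    (hx : (w, z) ∈ (Pset d κ).extremePoints ℝ) {i j : Fin d} (hij : i ≠ j)
    (a₁ b₁ a₂ b₂ : ℝ)
    (hab : a₁ ≠ 0 ∨ b₁ ≠ 0)
    (hfa₁ : a₁ ≠ 0 → 0 < w i ∧ w i < 1) (hfb₁ : b₁ ≠ 0 → 0 < z i ∧ z i < 1)
    (hfa₂ : a₂ ≠ 0 → 0 < w j ∧ w j < 1) (hfb₂ : b₂ ≠ 0 → 0 < z j ∧ z j < 1)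
    (htie₁ : w i = z i → a₁ = b₁) (htie₂ : w j = z j → a₂ = b₂)
    (hsa : a₁ + a₂ = 0 ∨ ∑ t, w t < 1) (hsb : b₁ + b₂ = 0 ∨ ∑ t, z t < (κ:ℝ)) : False := by
  classical
  refine frac_contra (u := fun t => if t = i then a₁ else if t = j then a₂ else 0)
    (v := fun t => if t = i then b₁ else if t = j then b₂ else 0) hx ⟨i, ?_⟩ ?_ ?_ ?_ ?_ ?_
  · simpa [hij] using hab
  · intro t ht
    by_cases h1 : t = i
    · subst h1; exact hfa₁ (by simpa [hij] using ht)
    · by_cases h2 : t = j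
      · subst h2; exact hfa₂ (by simpa [h1] using ht)
      · simp [h1, h2] at ht
  · intro t ht
    by_cases h1 : t = i
    · subst h1; exact hfb₁ (by simpa [hij] using ht)
    · by_cases h2 : t = j
      · subst h2; exact hfb₂ (by simpa [h1] using ht)
      · simp [h1, h2] at ht
  · intro t hw'
    by_cases h1 : t = i
    · subst h1; simp [hij, htie₁ hw']
    · by_cases h2 : t = j
      · subst h2; simp [h1, htie₂ hw']
      · simp [h1, h2]
  · rw [sum_ite₂ hij]; exact hsa
  · rw [sum_ite₂ hij]; exact hsb

lemma C3 {d κ : ℕ} {w z : Fin d → ℝ}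
    (hx : (w, z) ∈ (Pset d κ).extremePoints ℝ) {i j k : Fin d}
    (hij : i ≠ j) (hik : i ≠ k) (hjk : j ≠ k)
    (a₁ b₁ a₂ b₂ a₃ b₃ : ℝ)
    (hab : a₁ ≠ 0 ∨ b₁ ≠ 0)
    (hfa₁ : a₁ ≠ 0 → 0 < w i ∧ w i < 1) (hfb₁ : b₁ ≠ 0 → 0 < z i ∧ z i < 1)
    (hfa₂ : a₂ ≠ 0 → 0 < w j ∧ w j < 1) (hfb₂ : b₂ ≠ 0 → 0 < z j ∧ z j < 1)
    (hfa₃ : a₃ ≠ 0 → 0 < w k ∧ w k < 1) (hfb₃ : b₃ ≠ 0 → 0 < z k ∧ z k < 1)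
    (htie₁ : w i = z i → a₁ = b₁) (htie₂ : w j = z j → a₂ = b₂)
    (htie₃ : w k = z k → a₃ = b₃)
    (hsa : a₁ + a₂ + a₃ = 0 ∨ ∑ t, w t < 1)
    (hsb : b₁ + b₂ + b₃ = 0 ∨ ∑ t, z t < (κ:ℝ)) : False := by
  classical
  refine frac_contra
    (u := fun t => if t = i then a₁ else if t = j then a₂ else if t = k then a₃ else 0)
    (v := fun t => if t = i then b₁ else if t = j then b₂ else if t = k then b₃ else 0)
    hx ⟨i, ?_⟩ ?_ ?_ ?_ ?_ ?_
  · simpa [hij, hik] using hab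
  · intro t ht
    by_cases h1 : t = i
    · subst h1; exact hfa₁ (by simpa [hij, hik] using ht)
    · by_cases h2 : t = j
      · subst h2; exact hfa₂ (by simpa [h1, hjk] using ht)
      · by_cases h3 : t = k
        · subst h3; exact hfa₃ (by simpa [h1, h2] using ht)
        · simp [h1, h2, h3] at ht
  · intro t ht
    by_cases h1 : t = i
    · subst h1; exact hfb₁ (by simpa [hij, hik] using ht)
    · by_cases h2 : t = j
      · subst h2; exact hfb₂ (by simpa [h1, hjk] using ht)
      · by_cases h3 : t = k
        · subst h3; exact hfb₃ (by simpa [h1, h2] using ht)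
        · simp [h1, h2, h3] at ht
  · intro t hw'
    by_cases h1 : t = i
    · subst h1; simp [hij, hik, htie₁ hw']
    · by_cases h2 : t = j
      · subst h2; simp [h1, hjk, htie₂ hw']
      · by_cases h3 : t = k
        · subst h3; simp [h1, h2, htie₃ hw']
        · simp [h1, h2, h3]
  · rw [sum_ite₃ hij hik hjk]; exact hsa
  · rw [sum_ite₃ hij hik hjk]; exact hsb

lemma frac_of_not {r : ℝ} (h0 : 0 ≤ r) (h1 : r ≤ 1) (h : ¬(r = 0 ∨ r = 1)) :
    0 < r ∧ r < 1 := by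
  push_neg at h
  exact ⟨lt_of_le_of_ne h0 (Ne.symm h.1), lt_of_le_of_ne h1 h.2⟩

lemma sum_zero_one_nat {d : ℕ} (f : Fin d → ℝ) (s : Finset (Fin d))
    (hf : ∀ t ∈ s, f t = 0 ∨ f t = 1) : ∃ m : ℕ, ∑ t ∈ s, f t = m := by
  classical
  induction s using Finset.induction_on with
  | empty => exact ⟨0, by simp⟩
  | @insert a s' hnotmem ih =>
    obtain ⟨m, hm⟩ := ih (fun t ht => hf t (Finset.mem_insert_of_mem ht))
    rcases hf a (Finset.mem_insert_self _ _) with h | h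
    · exact ⟨m, by rw [Finset.sum_insert hnotmem, h, hm]; simp⟩
    · exact ⟨m + 1, by rw [Finset.sum_insert hnotmem, h, hm]; push_cast; ring⟩

lemma exists_other_frac {d : ℕ} (f : Fin d → ℝ) (hb : ∀ t, 0 ≤ f t ∧ f t ≤ 1)
    (n : ℕ) (hsum : ∑ t, f t = n) (i : Fin d) (hi1 : 0 < f i) (hi2 : f i < 1) :
    ∃ j, j ≠ i ∧ 0 < f j ∧ f j < 1 := by
  classical
  by_contra hcon
  push_neg at hcon
  have h01 : ∀ t ∈ Finset.univ.erase i, f t = 0 ∨ f t = 1 := by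
    intro t ht
    have htne : t ≠ i := (Finset.mem_erase.mp ht).1
    by_contra h
    obtain ⟨h1, h2⟩ := frac_of_not (hb t).1 (hb t).2 h
    exact absurd (hcon t htne h1) (by simpa using h2)
  obtain ⟨m, hm⟩ := sum_zero_one_nat f _ h01
  have hsplit : f i + ∑ t ∈ Finset.univ.erase i, f t = (n : ℝ) := by
    rw [Finset.add_sum_erase _ f (Finset.mem_univ i)]
    exact hsum
  rw [hm] at hsplit
  have hfi : f i = (n : ℝ) - m := by linarith
  have h1 : (m : ℝ) < n := by linarith
  have h2 : (n : ℝ) < m + 1 := by linarith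
  have h1' : m < n := by exact_mod_cast h1
  have h2' : n < m + 1 := by exact_mod_cast h2
  omega

lemma MIX {d κ : ℕ} {w z : Fin d → ℝ}
    (hx : (w, z) ∈ (Pset d κ).extremePoints ℝ) {i j : Fin d} (hij : i ≠ j)
    (hwi : 0 < w i ∧ w i < 1) (hwj : 0 < w j ∧ w j < 1)
    (hsi : w i < z i) (htj : w j = z j)
    (hTt : ∑ t, z t = (κ:ℝ)) : False := by
  obtain ⟨hwb, hzb, hS, hwz, hT⟩ := hx.1
  have hzj : 0 < z j ∧ z j < 1 := htj ▸ hwj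
  by_cases hzi : z i < 1
  · -- z i fractional : move (w i, z i) up, (w j, z j) down
    exact C2 hx hij 1 1 (-1) (-1) (Or.inl one_ne_zero)
      (fun _ => hwi) (fun _ => ⟨lt_of_le_of_lt (hwb i).1 hsi, hzi⟩)
      (fun _ => hwj) (fun _ => hzj)
      (fun _ => rfl) (fun _ => rfl)
      (Or.inl (by ring)) (Or.inl (by ring))
  · have hzi1 : z i = 1 := le_antisymm (hzb i).2 (not_lt.mp hzi)
    obtain ⟨k, hkj, hzk⟩ := exists_other_frac z (fun t => ⟨(hzb t).1, (hzb t).2⟩) κ hTt j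
      hzj.1 hzj.2
    have hki : k ≠ i := by
      intro h
      rw [h, hzi1] at hzk
      exact absurd hzk.2 (by norm_num)
    by_cases tk : w k = z k
    · -- both j and k are ties with fractional values
      have hwk : 0 < w k ∧ w k < 1 := tk ▸ hzk
      exact C2 hx (show j ≠ k from fun h => hkj h.symm) 1 1 (-1) (-1) (Or.inl one_ne_zero)
        (fun _ => hwj) (fun _ => hzj) (fun _ => hwk) (fun _ => hzk)
        (fun _ => rfl) (fun _ => rfl) (Or.inl (by ring)) (Or.inl (by ring))
    · -- three-index move
      exact C3 hx hij hki.symm (show j ≠ k from fun h => hkj h.symm)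
        1 0 (-1) (-1) 0 1 (Or.inl one_ne_zero)
        (fun _ => hwi) (fun h => absurd rfl h)
        (fun _ => hwj) (fun _ => hzj)
        (fun h => absurd rfl h) (fun _ => hzk)
        (fun h => absurd h (ne_of_lt hsi)) (fun _ => rfl) (fun h => absurd h tk)
        (Or.inl (by ring)) (Or.inl (by ring))

lemma main_contra {d κ : ℕ} {w z : Fin d → ℝ}
    (hx : (w, z) ∈ (Pset d κ).extremePoints ℝ) (i₀ : Fin d)
    (hfrac : (0 < w i₀ ∧ w i₀ < 1) ∨ (0 < z i₀ ∧ z i₀ < 1)) : False := by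
  classical
  obtain ⟨hwb, hzb, hS, hwz, hT⟩ := hx.1
  simp only at hwb hzb hS hwz hT
  -- basic facts
  have hwb' : ∀ t, 0 ≤ w t ∧ w t ≤ 1 := fun t => ⟨(hwb t).1, (hwb t).2⟩
  have hzb' : ∀ t, 0 ≤ z t ∧ z t ≤ 1 := fun t => ⟨(hzb t).1, (hzb t).2⟩
  by_cases hSt : ∑ t, w t = 1 <;> by_cases hTt : ∑ t, z t = (κ:ℝ)
  · -- both sums tight
    by_cases hA : ∃ t, 0 < w t ∧ w t < 1
    · obtain ⟨i, hwi⟩ := hA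
      obtain ⟨j, hji, hwj⟩ := exists_other_frac w hwb' 1 (by exact_mod_cast hSt) i hwi.1 hwi.2
      have hij : i ≠ j := fun h => hji (h.symm)
      by_cases ti : w i = z i <;> by_cases tj : w j = z j
      · exact C2 hx hij 1 1 (-1) (-1) (Or.inl one_ne_zero)
          (fun _ => hwi) (fun _ => ti ▸ hwi) (fun _ => hwj) (fun _ => tj ▸ hwj)
          (fun _ => rfl) (fun _ => rfl) (Or.inl (by ring)) (Or.inl (by ring))
      · exact MIX hx hji (hwj) (hwi) (lt_of_le_of_ne (hwz j) tj) ti hTt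
      · exact MIX hx hij (hwi) (hwj) (lt_of_le_of_ne (hwz i) ti) tj hTt
      · exact C2 hx hij 1 0 (-1) 0 (Or.inl one_ne_zero)
          (fun _ => hwi) (fun h => absurd rfl h) (fun _ => hwj) (fun h => absurd rfl h)
          (fun h => absurd h ti) (fun h => absurd h tj)
          (Or.inl (by ring)) (Or.inl (by ring))
    · -- no fractional w
      have hzfrac : 0 < z i₀ ∧ z i₀ < 1 := by
        rcases hfrac with h | h
        · exact absurd ⟨i₀, h⟩ hA
        · exact h
      obtain ⟨j, hji, hzj⟩ := exists_other_frac z hzb' κ hTt i₀ hzfrac.1 hzfrac.2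
      have hti : w i₀ ≠ z i₀ := fun h => hA ⟨i₀, h ▸ hzfrac⟩
      have htj : w j ≠ z j := fun h => hA ⟨j, h ▸ hzj⟩
      exact C2 hx (fun h => hji h.symm) 0 1 0 (-1) (Or.inr one_ne_zero)
        (fun h => absurd rfl h) (fun _ => hzfrac) (fun h => absurd rfl h) (fun _ => hzj)
        (fun h => absurd h hti) (fun h => absurd h htj)
        (Or.inl (by ring)) (Or.inl (by ring))
  · -- w-sum tight, z-sum slack
    have hT' : ∑ t, z t < (κ:ℝ) := lt_of_le_of_ne hT hTt
    by_cases hA : ∃ t, 0 < w t ∧ w t < 1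
    · obtain ⟨i, hwi⟩ := hA
      obtain ⟨j, hji, hwj⟩ := exists_other_frac w hwb' 1 (by exact_mod_cast hSt) i hwi.1 hwi.2
      have hij : i ≠ j := fun h => hji (h.symm)
      exact C2 hx hij 1 (if w i = z i then 1 else 0) (-1) (if w j = z j then -1 else 0)
        (Or.inl one_ne_zero)
        (fun _ => hwi)
        (fun hb => by
          have : w i = z i := by by_contra h; simp [h] at hb
          exact this ▸ hwi)
        (fun _ => hwj)
        (fun hb => by
          have : w j = z j := by by_contra h; simp [h] at hb
          exact this ▸ hwj)
        (fun h => by simp [h]) (fun h => by simp [h])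
        (Or.inl (by ring)) (Or.inr hT')
    · have hzfrac : 0 < z i₀ ∧ z i₀ < 1 := by
        rcases hfrac with h | h
        · exact absurd ⟨i₀, h⟩ hA
        · exact h
      have hti : w i₀ ≠ z i₀ := fun h => hA ⟨i₀, h ▸ hzfrac⟩
      exact C1 hx i₀ 0 1 (Or.inr one_ne_zero) (fun h => absurd rfl h) (fun _ => hzfrac)
        (fun h => absurd h hti) (Or.inl rfl) (Or.inr hT')
  · -- w-sum slack, z-sum tight
    have hS' : ∑ t, w t < 1 := lt_of_le_of_ne hS hSt
    by_cases hB : ∃ t, 0 < z t ∧ z t < 1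
    · obtain ⟨i, hzi⟩ := hB
      obtain ⟨j, hji, hzj⟩ := exists_other_frac z hzb' κ hTt i hzi.1 hzi.2
      have hij : i ≠ j := fun h => hji (h.symm)
      exact C2 hx hij (if w i = z i then 1 else 0) 1 (if w j = z j then -1 else 0) (-1)
        (Or.inr one_ne_zero)
        (fun ha => by
          have : w i = z i := by by_contra h; simp [h] at ha
          exact this ▸ hzi)
        (fun _ => hzi)
        (fun ha => by
          have : w j = z j := by by_contra h; simp [h] at ha
          exact this ▸ hzj)
        (fun _ => hzj)
        (fun h => by simp [h]) (fun h => by simp [h])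
        (Or.inr hS') (Or.inl (by ring))
    · have hwfrac : 0 < w i₀ ∧ w i₀ < 1 := by
        rcases hfrac with h | h
        · exact h
        · exact absurd ⟨i₀, h⟩ hB
      have hti : w i₀ ≠ z i₀ := fun h => hB ⟨i₀, h ▸ hwfrac⟩
      exact C1 hx i₀ 1 0 (Or.inl one_ne_zero) (fun _ => hwfrac) (fun h => absurd rfl h)
        (fun h => absurd h hti) (Or.inr hS') (Or.inl rfl)
  · -- both sums slack
    have hS' : ∑ t, w t < 1 := lt_of_le_of_ne hS hSt
    have hT' : ∑ t, z t < (κ:ℝ) := lt_of_le_of_ne hT hTt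
    rcases hfrac with hwf | hzf
    · by_cases ht : w i₀ = z i₀
      · exact C1 hx i₀ 1 1 (Or.inl one_ne_zero) (fun _ => hwf) (fun _ => ht ▸ hwf)
          (fun _ => rfl) (Or.inr hS') (Or.inr hT')
      · exact C1 hx i₀ 1 0 (Or.inl one_ne_zero) (fun _ => hwf) (fun h => absurd rfl h)
          (fun h => absurd h ht) (Or.inr hS') (Or.inl rfl)
    · by_cases ht : w i₀ = z i₀
      · exact C1 hx i₀ 1 1 (Or.inl one_ne_zero) (fun _ => ht ▸ hzf) (fun _ => hzf)
          (fun _ => rfl) (Or.inr hS') (Or.inr hT')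
      · exact C1 hx i₀ 0 1 (Or.inr one_ne_zero) (fun h => absurd rfl h) (fun _ => hzf)
          (fun h => absurd h ht) (Or.inl rfl) (Or.inr hT')

lemma extremePoints_subset_Oset {d κ : ℕ} :
    (Pset d κ).extremePoints ℝ ⊆ Oset d κ := by
  rintro ⟨w, z⟩ hx
  obtain ⟨hwb, hzb, hS, hwz, hT⟩ := hx.1
  have key : ∀ i, (w i = 0 ∨ w i = 1) ∧ (z i = 0 ∨ z i = 1) := by
    intro i
    by_contra hcon
    have : (0 < w i ∧ w i < 1) ∨ (0 < z i ∧ z i < 1) := by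
      by_cases h1 : w i = 0 ∨ w i = 1
      · by_cases h2 : z i = 0 ∨ z i = 1
        · exact absurd ⟨h1, h2⟩ hcon
        · exact Or.inr (frac_of_not (hzb i).1 (hzb i).2 h2)
      · exact Or.inl (frac_of_not (hwb i).1 (hwb i).2 h1)
    exact main_contra hx i this
  exact ⟨fun i => (key i).1, ⟨fun i => (key i).2, hT⟩, hS, hwz⟩

lemma Oset_subset_Pset {d κ : ℕ} : Oset d κ ⊆ Pset d κ := by
  rintro ⟨w, z⟩ ⟨hw, ⟨hz, hT⟩, hS, hwz⟩
  simp only at hw hz hS hwz hT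
  refine ⟨fun i => ?_, fun i => ?_, hS, hwz, hT⟩
  · rcases hw i with h | h <;> simp [h]
  · rcases hz i with h | h <;> simp [h]

lemma Pset_convex {d κ : ℕ} : Convex ℝ (Pset d κ) := by
  rintro ⟨w₁, z₁⟩ ⟨hw₁, hz₁, hS₁, hwz₁, hT₁⟩ ⟨w₂, z₂⟩ ⟨hw₂, hz₂, hS₂, hwz₂, hT₂⟩
    a b ha hb hab
  simp only at hw₁ hz₁ hS₁ hwz₁ hT₁ hw₂ hz₂ hS₂ hwz₂ hT₂
  refine ⟨fun i => ?_, fun i => ?_, ?_, fun i => ?_, ?_⟩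
  · simp only [Prod.smul_fst, Prod.fst_add, Pi.add_apply, Pi.smul_apply, smul_eq_mul]
    constructor
    · have := (hw₁ i).1; have := (hw₂ i).1; positivity
    · have := (hw₁ i).2; have := (hw₂ i).2; nlinarith
  · simp only [Prod.smul_snd, Prod.snd_add, Pi.add_apply, Pi.smul_apply, smul_eq_mul]
    constructor
    · have := (hz₁ i).1; have := (hz₂ i).1; positivity
    · have := (hz₁ i).2; have := (hz₂ i).2; nlinarith
  · simp only [Prod.smul_fst, Prod.fst_add, Pi.add_apply, Pi.smul_apply, smul_eq_mul,
      Finset.sum_add_distrib, ← Finset.mul_sum]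
    nlinarith
  · simp only [Prod.smul_fst, Prod.smul_snd, Prod.fst_add, Prod.snd_add, Pi.add_apply,
      Pi.smul_apply, smul_eq_mul]
    have := hwz₁ i; have := hwz₂ i
    nlinarith
  · simp only [Prod.smul_snd, Prod.snd_add, Pi.add_apply, Pi.smul_apply, smul_eq_mul,
      Finset.sum_add_distrib, ← Finset.mul_sum]
    nlinarith

lemma Pset_isClosed {d κ : ℕ} : IsClosed (Pset d κ) := by
  have h1 : IsClosed {q : (Fin d → ℝ) × (Fin d → ℝ) | ∀ i, q.1 i ∈ Set.Icc (0:ℝ) 1} := by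
    rw [Set.setOf_forall]
    exact isClosed_iInter fun i =>
      IsClosed.preimage ((continuous_apply i).comp continuous_fst) isClosed_Icc
  have h2 : IsClosed {q : (Fin d → ℝ) × (Fin d → ℝ) | ∀ i, q.2 i ∈ Set.Icc (0:ℝ) 1} := by
    rw [Set.setOf_forall]
    exact isClosed_iInter fun i =>
      IsClosed.preimage ((continuous_apply i).comp continuous_snd) isClosed_Icc
  have h3 : IsClosed {q : (Fin d → ℝ) × (Fin d → ℝ) | (∑ i, q.1 i) ≤ 1} :=
    isClosed_le (continuous_finset_sum _ fun i _ => (continuous_apply i).comp continuous_fst)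
      continuous_const
  have h4 : IsClosed {q : (Fin d → ℝ) × (Fin d → ℝ) | ∀ i, q.1 i ≤ q.2 i} := by
    rw [Set.setOf_forall]
    exact isClosed_iInter fun i =>
      isClosed_le ((continuous_apply i).comp continuous_fst)
        ((continuous_apply i).comp continuous_snd)
  have h5 : IsClosed {q : (Fin d → ℝ) × (Fin d → ℝ) | (∑ i, q.2 i) ≤ (κ:ℝ)} :=
    isClosed_le (continuous_finset_sum _ fun i _ => (continuous_apply i).comp continuous_snd)
      continuous_const
  have : Pset d κ = {q : (Fin d → ℝ) × (Fin d → ℝ) | ∀ i, q.1 i ∈ Set.Icc (0:ℝ) 1} ∩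
      ({q | ∀ i, q.2 i ∈ Set.Icc (0:ℝ) 1} ∩ ({q | (∑ i, q.1 i) ≤ 1} ∩
      ({q | ∀ i, q.1 i ≤ q.2 i} ∩ {q | (∑ i, q.2 i) ≤ (κ:ℝ)}))) := by
    ext q
    simp only [Pset, Set.mem_setOf_eq, Set.mem_inter_iff]
  rw [this]
  exact h1.inter (h2.inter (h3.inter (h4.inter h5)))

lemma Pset_isCompact {d κ : ℕ} : IsCompact (Pset d κ) := by
  have hbox : IsCompact ((Set.Icc (0 : Fin d → ℝ) 1) ×ˢ (Set.Icc (0 : Fin d → ℝ) 1)) :=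
    IsCompact.prod isCompact_Icc isCompact_Icc
  apply IsCompact.of_isClosed_subset hbox Pset_isClosed
  rintro ⟨w, z⟩ ⟨hw, hz, -, -, -⟩
  constructor <;> rw [Set.mem_Icc] <;> constructor <;> intro i
  · exact (hw i).1
  · exact (hw i).2
  · exact (hz i).1
  · exact (hz i).2

lemma Oset_finite {d κ : ℕ} : (Oset d κ).Finite := by
  have hfin : ({0, 1} : Set ℝ).Finite := (Set.finite_singleton 1).insert 0
  have hF : (Set.pi Set.univ (fun _ : Fin d => ({0, 1} : Set ℝ))).Finite :=
    Set.Finite.pi fun _ => hfin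
  apply Set.Finite.subset (hF.prod hF)
  rintro ⟨w, z⟩ ⟨hw, ⟨hz, -⟩, -, -⟩
  simp only at hw hz
  constructor
  · intro i _
    rcases hw i with h | h <;> simp [h]
  · intro i _
    rcases hz i with h | h <;> simp [h]

/-- Convex hull of `Ω` for the cardinality constraint set
`Z = {z ∈ {0,1}^d : 1ᵀz ≤ κ}` with `κ ∈ {2, …, d}`. -/
theorem convexHull_Omega_cardinality {d : ℕ} (κ : ℕ) (hκ2 : 2 ≤ κ) (hκd : κ ≤ d) :
    convexHull ℝ {q : (Fin d → ℝ) × (Fin d → ℝ) |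
        (∀ i, q.1 i = 0 ∨ q.1 i = 1) ∧
        ((∀ i, q.2 i = 0 ∨ q.2 i = 1) ∧ (∑ i, q.2 i) ≤ (κ : ℝ)) ∧
        (∑ i, q.1 i) ≤ 1 ∧ (∀ i, q.1 i ≤ q.2 i)}
      = {q : (Fin d → ℝ) × (Fin d → ℝ) |
        (∀ i, q.1 i ∈ Set.Icc (0 : ℝ) 1) ∧ (∀ i, q.2 i ∈ Set.Icc (0 : ℝ) 1) ∧
        (∑ i, q.1 i) ≤ 1 ∧ (∀ i, q.1 i ≤ q.2 i) ∧ (∑ i, q.2 i) ≤ (κ : ℝ)} := by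
  show convexHull ℝ (Oset d κ) = Pset d κ
  apply Set.Subset.antisymm
  · exact convexHull_min Oset_subset_Pset Pset_convex
  · have hKM : closure (convexHull ℝ ((Pset d κ).extremePoints ℝ)) = Pset d κ :=
      closure_convexHull_extremePoints Pset_isCompact Pset_convex
    have h1 : convexHull ℝ ((Pset d κ).extremePoints ℝ) ⊆ convexHull ℝ (Oset d κ) :=
      convexHull_mono extremePoints_subset_Oset
    have h2 : IsClosed (convexHull ℝ (Oset d κ)) := Oset_finite.isClosed_convexHull (𝕜 := ℝ)
    calc Pset d κ = closure (convexHull ℝ ((Pset d κ).extremePoints ℝ)) := hKM.symm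
      _ ⊆ closure (convexHull ℝ (Oset d κ)) := closure_mono h1
      _ = convexHull ℝ (Oset d κ) := h2.closure_eq
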